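/- arXiv:2302.03614 — 2 statements merged into one kernel-verified Lean document; each statement's English description precedes it below -/
import Mathlib

section
/- Let A be a finite set with a distinguished element 0, let η > 0 and ℓ > 0, and let w_0 : A → (0, ∞). For t ≥ 0 define w_{t+1}(b) = w_t(b)·exp(−η·c_t(b)), where the functions c_t : A → ℝ satisfy c_t(0) ≤ c_t(b) − ℓ for every b ≠ 0 and every t. Let x_t(b) = w_t(b)/Σ_{b'∈A} w_t(b'). Then for every n ≥ 0, x_n(0) ≥ x_0(0) / (x_0(0) + (1 − x_0(0))·exp(−η·ℓ·n)). -/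
/-- Core exponential-weight inequality: if the distinguished action `a0`
undercuts the cost of every other action by at least `ℓ > 0` at every update, then the
normalized exponential weight of `a0` satisfies
`x_n(a0) ≥ x_0(a0) / (x_0(a0) + (1 - x_0(a0)) exp (-η ℓ n))` for every `n`. -/
theorem stmt13 {α : Type*} [Fintype α] [DecidableEq α] (a0 : α)
    (η ℓ : ℝ) (hη : 0 < η) (hℓ : 0 < ℓ)
    (w : ℕ → α → ℝ) (hw0 : ∀ b, 0 < w 0 b)
    (c : ℕ → α → ℝ) (hc : ∀ (t : ℕ) (b : α), b ≠ a0 → c t a0 ≤ c t b - ℓ)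
    (hrec : ∀ (t : ℕ) (b : α), w (t + 1) b = w t b * Real.exp (-η * c t b))
    (x : ℕ → α → ℝ) (hx : ∀ (t : ℕ) (b : α), x t b = w t b / ∑ b', w t b') :
    ∀ n : ℕ,
      x 0 a0 / (x 0 a0 + (1 - x 0 a0) * Real.exp (-η * ℓ * (n : ℝ))) ≤ x n a0 := by
  have hwpos : ∀ t b, 0 < w t b := by
    intro t
    induction t with
    | zero => exact hw0
    | succ t ih =>
      intro b
      rw [hrec]
      exact mul_pos (ih b) (Real.exp_pos _)
  set s := Finset.univ.erase a0 with hs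
  have hsum : ∀ t, ∑ b', w t b' = w t a0 + ∑ b ∈ s, w t b := by
    intro t
    rw [hs, Finset.add_sum_erase _ _ (Finset.mem_univ a0)]
  have hSnn : ∀ t, 0 ≤ ∑ b ∈ s, w t b := fun t =>
    Finset.sum_nonneg fun b _ => (hwpos t b).le
  have hR : ∀ n : ℕ, (∑ b ∈ s, w n b) * w 0 a0 ≤
      Real.exp (-η * ℓ * n) * (∑ b ∈ s, w 0 b) * w n a0 := by
    intro n
    induction n with
    | zero => simp
    | succ n ih =>
      have hstep : ∑ b ∈ s, w (n + 1) b ≤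
          Real.exp (-η * c n a0) * Real.exp (-η * ℓ) * ∑ b ∈ s, w n b := by
        rw [Finset.mul_sum]
        refine Finset.sum_le_sum fun b hb => ?_
        have hb0 : b ≠ a0 := Finset.ne_of_mem_erase hb
        have h1 : -η * c n b ≤ -η * c n a0 + -η * ℓ := by
          have := hc n b hb0; nlinarith
        rw [hrec]
        calc w n b * Real.exp (-η * c n b)
            ≤ w n b * Real.exp (-η * c n a0 + -η * ℓ) :=
              mul_le_mul_of_nonneg_left (Real.exp_le_exp.mpr h1) (hwpos n b).le
          _ = Real.exp (-η * c n a0) * Real.exp (-η * ℓ) * w n b := by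
              rw [Real.exp_add]; ring
      have ha0 : w (n + 1) a0 = w n a0 * Real.exp (-η * c n a0) := hrec n a0
      have hE : Real.exp (-η * ℓ * ((n : ℝ) + 1)) =
          Real.exp (-η * ℓ * n) * Real.exp (-η * ℓ) := by
        rw [← Real.exp_add]; ring_nf
      push_cast
      calc (∑ b ∈ s, w (n + 1) b) * w 0 a0
          ≤ (Real.exp (-η * c n a0) * Real.exp (-η * ℓ) * ∑ b ∈ s, w n b) * w 0 a0 :=
            mul_le_mul_of_nonneg_right hstep (hwpos 0 a0).le
        _ = Real.exp (-η * c n a0) * Real.exp (-η * ℓ) * ((∑ b ∈ s, w n b) * w 0 a0) := by ring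
        _ ≤ Real.exp (-η * c n a0) * Real.exp (-η * ℓ) *
              (Real.exp (-η * ℓ * n) * (∑ b ∈ s, w 0 b) * w n a0) :=
            mul_le_mul_of_nonneg_left ih (by positivity)
        _ = Real.exp (-η * ℓ * ((n : ℝ) + 1)) * (∑ b ∈ s, w 0 b) * w (n + 1) a0 := by
            rw [ha0, hE]; ring
  intro n
  set W0 := w 0 a0 with hW0
  set S0 := ∑ b ∈ s, w 0 b with hS0
  set Wn := w n a0 with hWn
  set Sn := ∑ b ∈ s, w n b with hSn
  set E := Real.exp (-η * ℓ * n) with hEdef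
  have hW0p : 0 < W0 := hwpos 0 a0
  have hWnp : 0 < Wn := hwpos n a0
  have hS0nn : 0 ≤ S0 := hSnn 0
  have hSnnn : 0 ≤ Sn := hSnn n
  have hEp : 0 < E := Real.exp_pos _
  have key : Sn * W0 ≤ E * S0 * Wn := hR n
  rw [hx 0 a0, hx n a0, hsum 0, hsum n]
  have hD0 : 0 < W0 + S0 := by positivity
  have hDn : 0 < Wn + Sn := by positivity
  have h1x : 1 - W0 / (W0 + S0) = S0 / (W0 + S0) := by field_simp; ring
  have hdenpos : 0 < W0 / (W0 + S0) + (1 - W0 / (W0 + S0)) * E := by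
    rw [h1x]
    have h2 : 0 ≤ S0 / (W0 + S0) * E := by positivity
    have h3 : 0 < W0 / (W0 + S0) := div_pos hW0p hD0
    linarith
  rw [div_le_div_iff₀ hdenpos hDn, h1x]
  rw [div_mul_eq_mul_div, div_le_iff₀ hD0]
  have expand : w n a0 * (W0 / (W0 + S0) + S0 / (W0 + S0) * E) * (W0 + S0)
      = (W0 + S0 * E) * Wn := by
    field_simp
    ring
  rw [expand]
  show W0 * (Wn + Sn) ≤ (W0 + S0 * E) * Wn
  nlinarith [key]
end

section
/- Let M > 0 and d > 1, and let (X_t, Z_t)_{t≥0} be ℕ-valued stochastic processes such that almost surely X_t/d ≤ Z_t ≤ X_t and |X_{t+1} − X_t| ≤ M for all t; let F_t = σ(X_0, Z_0, ..., Z_t, X_t). Suppose there exist a function r : ℕ × ℕ → [0, ∞) with sup r < 1, an integer z_0, and a constant A > 0 such that: (a) for every t, almost surely on the event {Z_t ≥ z_0}, P(X_{t+1} > X_t | F_t) ≤ r(Z_t, n_t(Z_t)), where n_t(z) = #{s ≤ t : Z_s = z}; and (b) for every z ≥ z_0, Σ_{m∈ℕ} r(z, m) < A/z. Then X_t is almost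 surely bounded: P(sup_t X_t < ∞) = 1. -/
open MeasureTheory
open scoped ENNReal

/-- The σ-algebra `σ(X_0, Z_0, ..., Z_t, X_t)` generated by the walk and its companion
process up to time `t`. -/
noncomputable def walkFiltration {Ω : Type*} [MeasurableSpace Ω]
    (X Z : ℕ → Ω → ℕ) (t : ℕ) : MeasurableSpace Ω :=
  ⨆ s ∈ Set.Iic t,
    (MeasurableSpace.comap (X s) inferInstance ⊔ MeasurableSpace.comap (Z s) inferInstance)

section AuxStmt17

variable {Ω : Type*} [MeasurableSpace Ω]

lemma walkFiltration_le (X Z : ℕ → Ω → ℕ) (hX : ∀ t, Measurable (X t))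
    (hZ : ∀ t, Measurable (Z t)) (t : ℕ) :
    walkFiltration X Z t ≤ ‹MeasurableSpace Ω› := by
  apply iSup₂_le
  intro s _
  exact sup_le (hX s).comap_le (hZ s).comap_le

lemma measurable_Z_walk (X Z : ℕ → Ω → ℕ) {s t : ℕ} (hs : s ≤ t) :
    Measurable[walkFiltration X Z t] (Z s) := by
  have h : (MeasurableSpace.comap (X s) inferInstance ⊔ MeasurableSpace.comap (Z s) inferInstance)
      ≤ walkFiltration X Z t :=
    le_biSup (fun s => (MeasurableSpace.comap (X s) inferInstance
      ⊔ MeasurableSpace.comap (Z s) inferInstance)) (Set.mem_Iic.mpr hs)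
  exact measurable_iff_comap_le.mpr (le_trans le_sup_right h)

/-- visit count is walkFiltration-measurable -/
lemma measurable_visitCount (X Z : ℕ → Ω → ℕ) (t : ℕ) (z : ℕ) :
    Measurable[walkFiltration X Z t]
      (fun ω => ((Finset.range (t+1)).filter (fun s => Z s ω = z)).card) := by
  have h : (fun ω => ((Finset.range (t+1)).filter (fun s => Z s ω = z)).card)
      = fun ω => ∑ s ∈ Finset.range (t+1), if Z s ω = z then 1 else 0 := by
    funext ω; rw [Finset.card_filter]
  rw [h]
  refine Finset.measurable_sum _ (fun s hs => ?_)
  have hst : s ≤ t := Nat.lt_succ_iff.mp (Finset.mem_range.mp hs)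
  exact Measurable.ite (measurable_Z_walk X Z hst (measurableSet_singleton z))
    measurable_const measurable_const

lemma measurableSet_upmove (X : ℕ → Ω → ℕ) (hX : ∀ t, Measurable (X t)) (t : ℕ) :
    MeasurableSet {ω | X t ω < X (t+1) ω} := by
  have : {ω | X t ω < X (t+1) ω}
      = (fun ω => (X t ω, X (t+1) ω)) ⁻¹' {p : ℕ × ℕ | p.1 < p.2} := rfl
  rw [this]
  exact ((hX t).prodMk (hX (t+1))) ((Set.to_countable _).measurableSet)

/-- The set `{Z t = z, visit count = c}`, measurable w.r.t. the walk filtration. -/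
def visitSet (Z : ℕ → Ω → ℕ) (t z c : ℕ) : Set Ω :=
  {ω | Z t ω = z ∧ ((Finset.range (t+1)).filter (fun s => Z s ω = z)).card = c}

lemma measurable_visitSet (X Z : ℕ → Ω → ℕ) (t z c : ℕ) :
    MeasurableSet[walkFiltration X Z t] (visitSet Z t z c) := by
  have h1 : MeasurableSet[walkFiltration X Z t] {ω | Z t ω = z} :=
    measurable_Z_walk X Z (le_refl t) (measurableSet_singleton z)
  have h2 : MeasurableSet[walkFiltration X Z t]
      {ω | ((Finset.range (t+1)).filter (fun s => Z s ω = z)).card = c} :=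
    measurable_visitCount X Z t z (measurableSet_singleton c)
  exact h1.inter h2

/-- Key step: on the event `visitSet Z t z c` with `z ≥ z₀`, the probability of an up-move
is at most `r z c` times the measure of the event. -/
lemma step_bound (μ : Measure Ω) [IsProbabilityMeasure μ]
    (X Z : ℕ → Ω → ℕ) (hX : ∀ t, Measurable (X t)) (hZ : ∀ t, Measurable (Z t))
    (r : ℕ → ℕ → ℝ) (hr0 : ∀ z m, 0 ≤ r z m) (z₀ : ℕ)
    (hcond : ∀ t : ℕ, ∀ᵐ ω ∂μ, z₀ ≤ Z t ω →
      (μ[Set.indicator {ω' | X t ω' < X (t + 1) ω'} (fun _ => (1 : ℝ)) |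
          walkFiltration X Z t]) ω
        ≤ r (Z t ω) (((Finset.range (t + 1)).filter (fun s => Z s ω = Z t ω)).card))
    (t z c : ℕ) (hz : z₀ ≤ z) :
    μ ({ω | X t ω < X (t+1) ω} ∩ visitSet Z t z c)
      ≤ ENNReal.ofReal (r z c) * μ (visitSet Z t z c) := by
  have hm : walkFiltration X Z t ≤ ‹MeasurableSpace Ω› := walkFiltration_le X Z hX hZ t
  have hU : MeasurableSet {ω | X t ω < X (t+1) ω} := measurableSet_upmove X hX t
  have hBm : MeasurableSet[walkFiltration X Z t] (visitSet Z t z c) :=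
    measurable_visitSet X Z t z c
  have hB : MeasurableSet (visitSet Z t z c) := hm _ hBm
  set U : Set Ω := {ω | X t ω < X (t+1) ω}
  set B : Set Ω := visitSet Z t z c
  have hf : Integrable (Set.indicator U (fun _ => (1 : ℝ))) μ :=
    (integrable_const (1:ℝ)).indicator hU
  have h1 : ∫ ω in B, Set.indicator U (fun _ => (1 : ℝ)) ω ∂μ = (μ (U ∩ B)).toReal := by
    rw [setIntegral_indicator hU]
    simp [Set.inter_comm]; rfl
  have h2 : ∫ ω in B, (μ[Set.indicator U (fun _ => (1 : ℝ))|walkFiltration X Z t]) ω ∂μ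
      = ∫ ω in B, Set.indicator U (fun _ => (1 : ℝ)) ω ∂μ :=
    setIntegral_condExp hm hf hBm
  have h3 : ∫ ω in B, (μ[Set.indicator U (fun _ => (1 : ℝ))|walkFiltration X Z t]) ω ∂μ
      ≤ ∫ _ω in B, r z c ∂μ := by
    refine setIntegral_mono_ae_restrict integrable_condExp.integrableOn
      (integrable_const _).integrableOn ?_
    have hae : ∀ᵐ ω ∂(μ.restrict B), ω ∈ B := ae_restrict_mem hB
    filter_upwards [hae, ae_restrict_of_ae (hcond t)] with ω hωB hωc
    have hZz : Z t ω = z := hωB.1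
    have hcc : ((Finset.range (t+1)).filter (fun s => Z s ω = z)).card = c := hωB.2
    have h := hωc (by rw [hZz]; exact hz)
    rwa [hZz, hcc] at h
  have h4 : ∫ _ω in B, (r z c : ℝ) ∂μ = (μ B).toReal * r z c := by
    rw [setIntegral_const]; simp [smul_eq_mul]; exact Or.inl rfl
  have hkey : (μ (U ∩ B)).toReal ≤ r z c * (μ B).toReal := by
    rw [← h1, ← h2]
    rw [h4] at h3
    linarith [h3]
  calc μ (U ∩ B) = ENNReal.ofReal ((μ (U ∩ B)).toReal) := by
        rw [ENNReal.ofReal_toReal (measure_ne_top _ _)]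
    _ ≤ ENNReal.ofReal (r z c * (μ B).toReal) := ENNReal.ofReal_le_ofReal hkey
    _ = ENNReal.ofReal (r z c) * ENNReal.ofReal ((μ B).toReal) :=
        ENNReal.ofReal_mul (hr0 z c)
    _ = ENNReal.ofReal (r z c) * μ B := by
        rw [ENNReal.ofReal_toReal (measure_ne_top _ _)]

lemma visitCount_lt (Z : ℕ → Ω → ℕ) {t t' z : ℕ} (h : t < t') (ω : Ω)
    (h1 : Z t ω = z) (h2 : Z t' ω = z) :
    ((Finset.range (t+1)).filter (fun s => Z s ω = z)).card
      < ((Finset.range (t'+1)).filter (fun s => Z s ω = z)).card := by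
  have hsub : insert t' ((Finset.range (t+1)).filter (fun s => Z s ω = z))
      ⊆ (Finset.range (t'+1)).filter (fun s => Z s ω = z) := by
    intro x hx
    rcases Finset.mem_insert.mp hx with rfl | hx
    · exact Finset.mem_filter.mpr ⟨Finset.mem_range.mpr (Nat.lt_succ_self _), h2⟩
    · rcases Finset.mem_filter.mp hx with ⟨hx1, hx2⟩
      exact Finset.mem_filter.mpr
        ⟨Finset.mem_range.mpr (lt_of_lt_of_le (Finset.mem_range.mp hx1) (Nat.succ_le_succ h.le)),
          hx2⟩
  have hnot : t' ∉ (Finset.range (t+1)).filter (fun s => Z s ω = z) := by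
    intro hmem
    exact absurd (Finset.mem_range.mp (Finset.mem_filter.mp hmem).1) (by omega)
  calc ((Finset.range (t+1)).filter (fun s => Z s ω = z)).card
      < (insert t' ((Finset.range (t+1)).filter (fun s => Z s ω = z))).card := by
        rw [Finset.card_insert_of_notMem hnot]; omega
    _ ≤ _ := Finset.card_le_card hsub

lemma visitSet_disjoint_t (Z : ℕ → Ω → ℕ) (z c : ℕ) :
    Pairwise (Function.onFun Disjoint (fun t => visitSet Z t z c)) := by
  intro t t' hne
  rw [Function.onFun, Set.disjoint_left]
  rintro ω ⟨h1, h2⟩ ⟨h3, h4⟩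
  rcases lt_or_gt_of_ne hne with h | h
  · have := visitCount_lt Z h ω h1 h3; omega
  · have := visitCount_lt Z h ω h3 h1; omega

lemma visitSet_disjoint_c (Z : ℕ → Ω → ℕ) (t z : ℕ) :
    Pairwise (Function.onFun Disjoint (fun c => visitSet Z t z c)) := by
  intro c c' hne
  rw [Function.onFun, Set.disjoint_left]
  rintro ω ⟨h1, h2⟩ ⟨h3, h4⟩
  exact hne (h2 ▸ h4)

lemma level_bound (μ : Measure Ω) [IsProbabilityMeasure μ]
    (X Z : ℕ → Ω → ℕ) (hX : ∀ t, Measurable (X t)) (hZ : ∀ t, Measurable (Z t))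
    (r : ℕ → ℕ → ℝ) (hr0 : ∀ z m, 0 ≤ r z m) (z₀ : ℕ) (A : ℝ)
    (hsum : ∀ z : ℕ, z₀ ≤ z → Summable (r z) ∧ ∑' m, r z m < A / (z : ℝ))
    (hcond : ∀ t : ℕ, ∀ᵐ ω ∂μ, z₀ ≤ Z t ω →
      (μ[Set.indicator {ω' | X t ω' < X (t + 1) ω'} (fun _ => (1 : ℝ)) |
          walkFiltration X Z t]) ω
        ≤ r (Z t ω) (((Finset.range (t + 1)).filter (fun s => Z s ω = Z t ω)).card))
    (z : ℕ) (hz : z₀ ≤ z) :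
    ∑' t, μ ({ω | X t ω < X (t+1) ω} ∩ {ω | Z t ω = z}) ≤ ENNReal.ofReal (A / z) := by
  have hm : ∀ t, walkFiltration X Z t ≤ ‹MeasurableSpace Ω› :=
    walkFiltration_le X Z hX hZ
  have hBmeas : ∀ t c, MeasurableSet (visitSet Z t z c) :=
    fun t c => hm t _ (measurable_visitSet X Z t z c)
  have hUmeas : ∀ t, MeasurableSet {ω | X t ω < X (t+1) ω} :=
    measurableSet_upmove X hX
  -- partition {Z t = z} into visit sets over c
  have hpart : ∀ t, μ ({ω | X t ω < X (t+1) ω} ∩ {ω | Z t ω = z})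
      = ∑' c, μ ({ω | X t ω < X (t+1) ω} ∩ visitSet Z t z c) := by
    intro t
    have hset : {ω | X t ω < X (t+1) ω} ∩ {ω | Z t ω = z}
        = ⋃ c, ({ω | X t ω < X (t+1) ω} ∩ visitSet Z t z c) := by
      ext ω
      simp only [Set.mem_inter_iff, Set.mem_iUnion, Set.mem_setOf_eq, visitSet]
      constructor
      · rintro ⟨h1, h2⟩
        exact ⟨_, h1, h2, rfl⟩
      · rintro ⟨c, h1, h2, _⟩
        exact ⟨h1, h2⟩
    rw [hset]
    refine measure_iUnion ?_ (fun c => (hUmeas t).inter (hBmeas t c))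
    intro c c' hne
    exact Set.disjoint_left.mpr (fun ω h1 h2 =>
      Set.disjoint_left.mp (visitSet_disjoint_c Z t z hne) h1.2 h2.2)
  calc ∑' t, μ ({ω | X t ω < X (t+1) ω} ∩ {ω | Z t ω = z})
      = ∑' t, ∑' c, μ ({ω | X t ω < X (t+1) ω} ∩ visitSet Z t z c) := by
        exact tsum_congr hpart
    _ = ∑' c, ∑' t, μ ({ω | X t ω < X (t+1) ω} ∩ visitSet Z t z c) := ENNReal.tsum_comm
    _ ≤ ∑' c, ENNReal.ofReal (r z c) := by
        refine ENNReal.tsum_le_tsum (fun c => ?_)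
        calc ∑' t, μ ({ω | X t ω < X (t+1) ω} ∩ visitSet Z t z c)
            ≤ ∑' t, ENNReal.ofReal (r z c) * μ (visitSet Z t z c) :=
              ENNReal.tsum_le_tsum (fun t =>
                step_bound μ X Z hX hZ r hr0 z₀ hcond t z c hz)
          _ = ENNReal.ofReal (r z c) * ∑' t, μ (visitSet Z t z c) := ENNReal.tsum_mul_left
          _ ≤ ENNReal.ofReal (r z c) * 1 := by
              gcongr
              rw [← measure_iUnion (visitSet_disjoint_t Z z c) (fun t => hBmeas t c)]
              exact prob_le_one
          _ = ENNReal.ofReal (r z c) := mul_one _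
    _ = ENNReal.ofReal (∑' c, r z c) :=
        (ENNReal.ofReal_tsum_of_nonneg (hr0 z) (hsum z hz).1).symm
    _ ≤ ENNReal.ofReal (A / z) := ENNReal.ofReal_le_ofReal (hsum z hz).2.le

lemma band_bound (μ : Measure Ω) [IsProbabilityMeasure μ]
    (d : ℝ) (hd : 1 < d)
    (X Z : ℕ → Ω → ℕ) (hX : ∀ t, Measurable (X t)) (hZ : ∀ t, Measurable (Z t))
    (r : ℕ → ℕ → ℝ) (hr0 : ∀ z m, 0 ≤ r z m) (z₀ : ℕ) (A : ℝ) (hA : 0 < A)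
    (hsum : ∀ z : ℕ, z₀ ≤ z → Summable (r z) ∧ ∑' m, r z m < A / (z : ℝ))
    (hcond : ∀ t : ℕ, ∀ᵐ ω ∂μ, z₀ ≤ Z t ω →
      (μ[Set.indicator {ω' | X t ω' < X (t + 1) ω'} (fun _ => (1 : ℝ)) |
          walkFiltration X Z t]) ω
        ≤ r (Z t ω) (((Finset.range (t + 1)).filter (fun s => Z s ω = Z t ω)).card))
    (L z1 : ℕ) (hz0 : z₀ ≤ z1) (hz1 : (L:ℝ)/d ≤ z1) (hL : 1 ≤ L) :
    ∫⁻ ω, (∑' t, if X t ω < X (t+1) ω ∧ z1 ≤ Z t ω ∧ Z t ω ≤ 2*L then (1:ℝ≥0∞) else 0) ∂μ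
      ≤ ENNReal.ofReal (3 * A * d) := by
  have hUmeas : ∀ t, MeasurableSet {ω | X t ω < X (t+1) ω} := measurableSet_upmove X hX
  have hcondmeas : ∀ t : ℕ, MeasurableSet
      {ω | X t ω < X (t+1) ω ∧ z1 ≤ Z t ω ∧ Z t ω ≤ 2*L} := by
    intro t
    have heq : {ω | X t ω < X (t+1) ω ∧ z1 ≤ Z t ω ∧ Z t ω ≤ 2*L}
        = (fun ω => (X t ω, X (t+1) ω, Z t ω)) ⁻¹'
          {p : ℕ × ℕ × ℕ | p.1 < p.2.1 ∧ z1 ≤ p.2.2 ∧ p.2.2 ≤ 2*L} := rfl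
    rw [heq]
    exact ((hX t).prodMk ((hX (t+1)).prodMk (hZ t)))
      ((Set.to_countable _).measurableSet)
  have hz1pos : 0 < z1 := by
    have hdpos : (0:ℝ) < d := lt_trans one_pos hd
    have : (0:ℝ) < (L:ℝ)/d := div_pos (by exact_mod_cast hL) hdpos
    have := lt_of_lt_of_le this hz1
    exact_mod_cast Nat.cast_pos.mp this
  -- rewrite the integral as a sum of measures
  have hstep1 : ∫⁻ ω, (∑' t, if X t ω < X (t+1) ω ∧ z1 ≤ Z t ω ∧ Z t ω ≤ 2*L
      then (1:ℝ≥0∞) else 0) ∂μ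
      = ∑' t, μ {ω | X t ω < X (t+1) ω ∧ z1 ≤ Z t ω ∧ Z t ω ≤ 2*L} := by
    rw [lintegral_tsum (fun t => (Measurable.ite (hcondmeas t) measurable_const
       measurable_const).aemeasurable)]
    refine tsum_congr (fun t => ?_)
    rw [← lintegral_indicator_one (hcondmeas t)]
    refine lintegral_congr (fun ω => ?_)
    by_cases h : X t ω < X (t+1) ω ∧ z1 ≤ Z t ω ∧ Z t ω ≤ 2*L
    · simp [h, Set.indicator_of_mem, Set.mem_setOf_eq]
    · simp [h, Set.indicator_of_notMem, Set.mem_setOf_eq]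
  have hstep2 : ∀ t, μ {ω | X t ω < X (t+1) ω ∧ z1 ≤ Z t ω ∧ Z t ω ≤ 2*L}
      = ∑ z ∈ Finset.Icc z1 (2*L), μ ({ω | X t ω < X (t+1) ω} ∩ {ω | Z t ω = z}) := by
    intro t
    rw [← measure_biUnion_finset]
    · congr 1
      ext ω
      simp only [Set.mem_setOf_eq, Set.mem_iUnion, Set.mem_inter_iff, Finset.mem_Icc]
      constructor
      · rintro ⟨h1, h2, h3⟩; exact ⟨Z t ω, ⟨h2, h3⟩, h1, rfl⟩
      · rintro ⟨z, ⟨h2, h3⟩, h1, rfl⟩; exact ⟨h1, h2, h3⟩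
    · intro z _ z' _ hne
      refine Set.disjoint_left.mpr (fun ω h1 h2 => hne ?_)
      rw [← h1.2, ← h2.2]
    · intro z _
      exact (hUmeas t).inter (hZ t (measurableSet_singleton z))
  calc ∫⁻ ω, (∑' t, if X t ω < X (t+1) ω ∧ z1 ≤ Z t ω ∧ Z t ω ≤ 2*L
        then (1:ℝ≥0∞) else 0) ∂μ
      = ∑' t, ∑ z ∈ Finset.Icc z1 (2*L),
          μ ({ω | X t ω < X (t+1) ω} ∩ {ω | Z t ω = z}) := by
        rw [hstep1]; exact tsum_congr hstep2
    _ = ∑ z ∈ Finset.Icc z1 (2*L), ∑' t,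
          μ ({ω | X t ω < X (t+1) ω} ∩ {ω | Z t ω = z}) := by
        rw [Summable.tsum_finsetSum (fun z _ => ENNReal.summable)]
    _ ≤ ∑ z ∈ Finset.Icc z1 (2*L), ENNReal.ofReal (A / z) := by
        refine Finset.sum_le_sum (fun z hz => ?_)
        exact level_bound μ X Z hX hZ r hr0 z₀ A hsum hcond z
          (le_trans hz0 (Finset.mem_Icc.mp hz).1)
    _ ≤ ENNReal.ofReal (3 * A * d) := by
        rw [← ENNReal.ofReal_sum_of_nonneg (fun z _ => by positivity)]
        refine ENNReal.ofReal_le_ofReal ?_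
        have hdpos : (0:ℝ) < d := lt_trans one_pos hd
        have hLpos : (0:ℝ) < L := by exact_mod_cast hL
        have hterm : ∀ z ∈ Finset.Icc z1 (2*L), A / (z:ℝ) ≤ A * d / L := by
          intro z hz
          have hz1z : z1 ≤ z := (Finset.mem_Icc.mp hz).1
          have h1 : (L:ℝ)/d ≤ (z:ℝ) := le_trans hz1 (by exact_mod_cast hz1z)
          have h2 : (0:ℝ) < (L:ℝ)/d := div_pos hLpos hdpos
          calc A / (z:ℝ) ≤ A / ((L:ℝ)/d) := div_le_div_of_nonneg_left hA.le h2 h1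
            _ = A * d / L := by field_simp
        calc ∑ z ∈ Finset.Icc z1 (2*L), A / (z:ℝ)
            ≤ ∑ _z ∈ Finset.Icc z1 (2*L), A * d / L := Finset.sum_le_sum hterm
          _ = (Finset.Icc z1 (2*L)).card * (A * d / L) := by
              rw [Finset.sum_const, nsmul_eq_mul]
          _ ≤ (3 * L : ℕ) * (A * d / L) := by
              have hcard : (Finset.Icc z1 (2*L)).card ≤ 3 * L := by
                rw [Nat.card_Icc]; omega
              have hpos : (0:ℝ) ≤ A * d / L := by positivity
              exact mul_le_mul_of_nonneg_right (by exact_mod_cast hcard) hpos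
          _ = 3 * A * d := by
              push_cast
              field_simp

lemma crossing_count (X Z : ℕ → Ω → ℕ) (ω : Ω) (M d : ℝ) (hM : 0 < M) (hd : 1 < d)
    (hω : ∀ t : ℕ, ((X t ω : ℝ) / d ≤ (Z t ω : ℝ) ∧ (Z t ω : ℝ) ≤ (X t ω : ℝ)) ∧
        |((X (t + 1) ω : ℝ)) - (X t ω : ℝ)| ≤ M)
    (L z1 : ℕ) (hz1le : ∀ n : ℕ, (L:ℝ)/d ≤ (n:ℝ) → z1 ≤ n)
    (hX0 : X 0 ω < L) (hex : ∃ u, 2*L < X u ω) :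
    ENNReal.ofReal (((L:ℝ) - M)/M)
      ≤ ∑' t, (if X t ω < X (t+1) ω ∧ z1 ≤ Z t ω ∧ Z t ω ≤ 2*L then (1:ℝ≥0∞) else 0) := by
  classical
  have hdpos : (0:ℝ) < d := lt_trans one_pos hd
  set u := Nat.find hex with hu_def
  have hu : 2*L < X u ω := Nat.find_spec hex
  have humin : ∀ v, v < u → X v ω ≤ 2*L := fun v hv => not_lt.mp (Nat.find_min hex hv)
  have hu0 : 0 < u := by
    rcases Nat.eq_zero_or_pos u with h | h
    · exfalso; rw [h] at hu; omega
    · exact h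
  -- the last time before u that X is below L
  set T := (Finset.range u).filter (fun t => X t ω < L) with hT_def
  have hTne : T.Nonempty := ⟨0, Finset.mem_filter.mpr ⟨Finset.mem_range.mpr hu0, hX0⟩⟩
  set a := T.max' hTne with ha_def
  have haT : a ∈ T := T.max'_mem hTne
  have hau : a < u := Finset.mem_range.mp (Finset.mem_filter.mp haT).1
  have haX : X a ω < L := (Finset.mem_filter.mp haT).2
  have hband : ∀ t, a < t → t < u → L ≤ X t ω ∧ X t ω ≤ 2*L := by
    intro t hat htu
    refine ⟨?_, humin t htu⟩
    by_contra h
    have : t ∈ T := Finset.mem_filter.mpr ⟨Finset.mem_range.mpr htu, by omega⟩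
    have := T.le_max' t this
    omega
  -- count up-moves in the crossing window
  set S := (Finset.range (u-(a+1))).filter
    (fun i => X (a+1+i) ω < X (a+1+i+1) ω) with hS_def
  -- telescoping bound
  have htel : (X u ω : ℝ) - X (a+1) ω
      = ∑ i ∈ Finset.range (u-(a+1)), ((X (a+1+(i+1)) ω : ℝ) - X (a+1+i) ω) := by
    have hn : a+1+(u-(a+1)) = u := by omega
    rw [Finset.sum_range_sub (fun i => (X (a+1+i) ω : ℝ)), hn]
  have hterm : ∀ i ∈ Finset.range (u-(a+1)),
      (X (a+1+(i+1)) ω : ℝ) - X (a+1+i) ω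
        ≤ if X (a+1+i) ω < X (a+1+i+1) ω then M else 0 := by
    intro i _
    by_cases h : X (a+1+i) ω < X (a+1+i+1) ω
    · rw [if_pos h]
      have := (hω (a+1+i)).2
      have h2 : (X (a+1+i+1) ω : ℝ) - X (a+1+i) ω ≤ M := (abs_le.mp this).2
      have h3 : a+1+(i+1) = a+1+i+1 := by omega
      rw [h3]; exact h2
    · rw [if_neg h]
      have h4 : X (a+1+i+1) ω ≤ X (a+1+i) ω := not_lt.mp h
      have h3 : a+1+(i+1) = a+1+i+1 := by omega
      rw [h3]
      have : (X (a+1+i+1) ω : ℝ) ≤ (X (a+1+i) ω : ℝ) := by exact_mod_cast h4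
      linarith
  have hsumbound : (X u ω : ℝ) - X (a+1) ω ≤ S.card * M := by
    rw [htel]
    calc ∑ i ∈ Finset.range (u-(a+1)), ((X (a+1+(i+1)) ω : ℝ) - X (a+1+i) ω)
        ≤ ∑ i ∈ Finset.range (u-(a+1)),
            (if X (a+1+i) ω < X (a+1+i+1) ω then M else 0) := Finset.sum_le_sum hterm
      _ = ∑ i ∈ S, M := by
          rw [hS_def, Finset.sum_filter]
      _ = S.card * M := by rw [Finset.sum_const, nsmul_eq_mul]
  -- X (a+1) is below L + M
  have hXa1 : (X (a+1) ω : ℝ) < L + M := by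
    have h1 := (abs_le.mp (hω a).2).2
    have h2 : (X a ω : ℝ) < L := by exact_mod_cast haX
    linarith
  have hXu : (2*L : ℝ) < X u ω := by exact_mod_cast hu
  have hcardM : ((L:ℝ) - M) < S.card * M := by
    have : (2*(L:ℝ)) - (L + M) < (X u ω : ℝ) - X (a+1) ω := by linarith
    calc (L:ℝ) - M = 2*(L:ℝ) - (L + M) := by ring
      _ < (X u ω : ℝ) - X (a+1) ω := this
      _ ≤ S.card * M := hsumbound
  have hcard : ((L:ℝ) - M)/M ≤ S.card := by
    rw [div_le_iff₀ hM]
    linarith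
  -- each up-move in the window contributes 1 to the tsum
  set S' := S.image (fun i => a+1+i) with hS'_def
  have hScard : S'.card = S.card := Finset.card_image_of_injective _ (fun x y h => by omega)
  have hS'prop : ∀ t ∈ S',
      X t ω < X (t+1) ω ∧ z1 ≤ Z t ω ∧ Z t ω ≤ 2*L := by
    intro t ht
    rcases Finset.mem_image.mp ht with ⟨i, hi, rfl⟩
    rcases Finset.mem_filter.mp hi with ⟨hir, hiu⟩
    have hiu' : i < u - (a+1) := Finset.mem_range.mp hir
    have h1 : a < a+1+i := by omega
    have h2 : a+1+i < u := by omega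
    obtain ⟨hLx, hx2L⟩ := hband (a+1+i) h1 h2
    have hup : X (a+1+i) ω < X (a+1+i+1) ω := hiu
    refine ⟨by have : a+1+i+1 = (a+1+i)+1 := rfl; omega, ?_, ?_⟩
    · refine hz1le (Z (a+1+i) ω) ?_
      have hzx := (hω (a+1+i)).1.1
      have hLx' : (L:ℝ) ≤ (X (a+1+i) ω : ℝ) := by exact_mod_cast hLx
      calc (L:ℝ)/d ≤ (X (a+1+i) ω : ℝ)/d := by gcongr
        _ ≤ (Z (a+1+i) ω : ℝ) := hzx
    · have hzx := (hω (a+1+i)).1.2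
      have : (Z (a+1+i) ω : ℝ) ≤ (X (a+1+i) ω : ℝ) := hzx
      have hzn : Z (a+1+i) ω ≤ X (a+1+i) ω := by exact_mod_cast this
      omega
  calc ENNReal.ofReal (((L:ℝ) - M)/M) ≤ ENNReal.ofReal ((S.card : ℝ)) :=
        ENNReal.ofReal_le_ofReal hcard
    _ = (S.card : ℝ≥0∞) := ENNReal.ofReal_natCast _
    _ = ∑ t ∈ S', (if X t ω < X (t+1) ω ∧ z1 ≤ Z t ω ∧ Z t ω ≤ 2*L
          then (1:ℝ≥0∞) else 0) := by
        rw [Finset.sum_congr rfl (fun t ht => if_pos (hS'prop t ht))]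
        simp [hScard]
    _ ≤ ∑' t, (if X t ω < X (t+1) ω ∧ z1 ≤ Z t ω ∧ Z t ω ≤ 2*L then (1:ℝ≥0∞) else 0) :=
        ENNReal.sum_le_tsum S'

lemma measurable_bandN (X Z : ℕ → Ω → ℕ) (hX : ∀ t, Measurable (X t))
    (hZ : ∀ t, Measurable (Z t)) (L z1 : ℕ) :
    Measurable (fun ω =>
      ∑' t, (if X t ω < X (t+1) ω ∧ z1 ≤ Z t ω ∧ Z t ω ≤ 2*L then (1:ℝ≥0∞) else 0)) := by
  refine Measurable.ennreal_tsum (fun t => ?_)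
  have heq : {ω | X t ω < X (t+1) ω ∧ z1 ≤ Z t ω ∧ Z t ω ≤ 2*L}
      = (fun ω => (X t ω, X (t+1) ω, Z t ω)) ⁻¹'
        {p : ℕ × ℕ × ℕ | p.1 < p.2.1 ∧ z1 ≤ p.2.2 ∧ p.2.2 ≤ 2*L} := rfl
  refine Measurable.ite ?_ measurable_const measurable_const
  rw [heq]
  exact ((hX t).prodMk ((hX (t+1)).prodMk (hZ t))) ((Set.to_countable _).measurableSet)


end AuxStmt17

/-- Reinforced random walk lemma: if `X_t / d ≤ Z_t ≤ X_t`, increments of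
`X` are bounded by `M`, the conditional probability of an upward move of `X` at a time when
`Z_t = z ≥ z₀` has been visited `m` times is at most `r z m`, with `sup r < 1` and
`Σ_m r z m < A / z` for `z ≥ z₀`, then `X` is almost surely bounded. -/
theorem stmt17 {Ω : Type*} [MeasurableSpace Ω] (μ : Measure Ω) [IsProbabilityMeasure μ]
    (M d : ℝ) (hM : 0 < M) (hd : 1 < d)
    (X Z : ℕ → Ω → ℕ) (hX : ∀ t, Measurable (X t)) (hZ : ∀ t, Measurable (Z t))
    (hbound : ∀ᵐ ω ∂μ, ∀ t : ℕ,
      ((X t ω : ℝ) / d ≤ (Z t ω : ℝ) ∧ (Z t ω : ℝ) ≤ (X t ω : ℝ)) ∧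
        |((X (t + 1) ω : ℝ)) - (X t ω : ℝ)| ≤ M)
    (r : ℕ → ℕ → ℝ) (hr0 : ∀ z m, 0 ≤ r z m)
    (p : ℝ) (hp : p < 1) (hrp : ∀ z m, r z m ≤ p)
    (z₀ : ℕ) (A : ℝ) (hA : 0 < A)
    (hsum : ∀ z : ℕ, z₀ ≤ z → Summable (r z) ∧ ∑' m, r z m < A / (z : ℝ))
    (hcond : ∀ t : ℕ, ∀ᵐ ω ∂μ, z₀ ≤ Z t ω →
      (μ[Set.indicator {ω' | X t ω' < X (t + 1) ω'} (fun _ => (1 : ℝ)) |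
          walkFiltration X Z t]) ω
        ≤ r (Z t ω) (((Finset.range (t + 1)).filter (fun s => Z s ω = Z t ω)).card)) :
    ∀ᵐ ω ∂μ, ∃ B : ℕ, ∀ t : ℕ, X t ω ≤ B := by
  classical
  have hdpos : (0:ℝ) < d := lt_trans one_pos hd
  -- the pointwise good set
  set g : Set Ω := {ω | ∀ t : ℕ,
      ((X t ω : ℝ) / d ≤ (Z t ω : ℝ) ∧ (Z t ω : ℝ) ≤ (X t ω : ℝ)) ∧
        |((X (t + 1) ω : ℝ)) - (X t ω : ℝ)| ≤ M} with hg_def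
  have hgc : μ gᶜ = 0 := by
    rw [hg_def, Set.compl_setOf]
    exact ae_iff.mp hbound
  -- main estimate for each starting bound j
  have hmain : ∀ j : ℕ, μ {ω | ω ∈ g ∧ X 0 ω < j ∧ ∀ B, ∃ t, B < X t ω} = 0 := by
    intro j
    set C : ℕ := j + ⌈d * z₀⌉₊ + ⌈M⌉₊ + 1 with hC_def
    set L : ℕ → ℕ := fun k => C + k with hL_def
    -- per-k bound
    have hk : ∀ k : ℕ, μ {ω | ω ∈ g ∧ X 0 ω < j ∧ ∀ B, ∃ t, B < X t ω}
        ≤ ENNReal.ofReal (3 * A * d / (((L k : ℝ) - M)/M)) := by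
      intro k
      set z1 : ℕ := max z₀ ⌈(L k : ℝ)/d⌉₊ with hz1_def
      have hLk1 : 1 ≤ L k := by simp only [hL_def, hC_def]; omega
      have hLkM : M < L k := by
        have h1 : M ≤ (⌈M⌉₊ : ℝ) := Nat.le_ceil M
        have h2 : (⌈M⌉₊ : ℝ) < L k := by
          have : ⌈M⌉₊ < L k := by simp only [hL_def, hC_def]; omega
          exact_mod_cast this
        linarith
      have hz1ge : (L k : ℝ)/d ≤ (z1 : ℝ) := by
        calc (L k : ℝ)/d ≤ (⌈(L k : ℝ)/d⌉₊ : ℝ) := Nat.le_ceil _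
          _ ≤ (z1 : ℝ) := by exact_mod_cast Nat.cast_le.mpr (le_max_right _ _)
      have hz0z1 : z₀ ≤ z1 := le_max_left _ _
      have hz0L : (z₀ : ℝ) ≤ (L k : ℝ)/d := by
        rw [le_div_iff₀ hdpos]
        calc (z₀:ℝ) * d = d * z₀ := by ring
          _ ≤ (⌈d * z₀⌉₊ : ℝ) := Nat.le_ceil _
          _ ≤ (L k : ℝ) := by
            have : ⌈d * z₀⌉₊ ≤ L k := by simp only [hL_def, hC_def]; omega
            exact_mod_cast this
      have hz1le : ∀ n : ℕ, (L k : ℝ)/d ≤ (n:ℝ) → z1 ≤ n := by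
        intro n hn
        refine max_le ?_ (Nat.ceil_le.mpr hn)
        have : (z₀ : ℝ) ≤ (n : ℝ) := le_trans hz0L hn
        exact_mod_cast this
      -- the bad set is contained in the Markov event
      have hsub : {ω | ω ∈ g ∧ X 0 ω < j ∧ ∀ B, ∃ t, B < X t ω}
          ⊆ {ω | ENNReal.ofReal (((L k : ℝ) - M)/M)
              ≤ ∑' t, (if X t ω < X (t+1) ω ∧ z1 ≤ Z t ω ∧ Z t ω ≤ 2*(L k)
                  then (1:ℝ≥0∞) else 0)} := by
        rintro ω ⟨hωg, hωj, hωu⟩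
        have hX0 : X 0 ω < L k := by
          have : j ≤ L k := by simp only [hL_def, hC_def]; omega
          omega
        have hex : ∃ u, 2*(L k) < X u ω := hωu (2*(L k))
        exact crossing_count X Z ω M d hM hd hωg (L k) z1 hz1le hX0 hex
      have hε0 : ENNReal.ofReal (((L k : ℝ) - M)/M) ≠ 0 := by
        refine (ne_of_gt (ENNReal.ofReal_pos.mpr ?_))
        apply div_pos _ hM
        linarith
      have hεtop : ENNReal.ofReal (((L k : ℝ) - M)/M) ≠ ⊤ := ENNReal.ofReal_ne_top
      calc μ {ω | ω ∈ g ∧ X 0 ω < j ∧ ∀ B, ∃ t, B < X t ω}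
          ≤ μ {ω | ENNReal.ofReal (((L k : ℝ) - M)/M)
              ≤ ∑' t, (if X t ω < X (t+1) ω ∧ z1 ≤ Z t ω ∧ Z t ω ≤ 2*(L k)
                  then (1:ℝ≥0∞) else 0)} := measure_mono hsub
        _ ≤ (∫⁻ ω, (∑' t, (if X t ω < X (t+1) ω ∧ z1 ≤ Z t ω ∧ Z t ω ≤ 2*(L k)
                  then (1:ℝ≥0∞) else 0)) ∂μ) / ENNReal.ofReal (((L k : ℝ) - M)/M) :=
            meas_ge_le_lintegral_div
              (measurable_bandN X Z hX hZ (L k) z1).aemeasurable hε0 hεtop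
        _ ≤ ENNReal.ofReal (3 * A * d) / ENNReal.ofReal (((L k : ℝ) - M)/M) := by
            gcongr
            exact band_bound μ d hd X Z hX hZ r hr0 z₀ A hA hsum hcond (L k) z1
              hz0z1 hz1ge hLk1
        _ = ENNReal.ofReal (3 * A * d / (((L k : ℝ) - M)/M)) := by
            have hpos : (0:ℝ) < ((L k:ℝ) - M)/M := div_pos (by linarith) hM
            exact (ENNReal.ofReal_div_of_pos hpos).symm
    -- take the limit k → ∞
    have htends : Filter.Tendsto
        (fun k : ℕ => ENNReal.ofReal (3 * A * d / (((L k : ℝ) - M)/M)))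
        Filter.atTop (nhds 0) := by
      have hden : Filter.Tendsto (fun k : ℕ => ((L k : ℝ) - M)/M)
          Filter.atTop Filter.atTop := by
        apply Filter.Tendsto.atTop_div_const hM
        have heq : (fun k : ℕ => (L k : ℝ) - M) = fun k : ℕ => (k:ℝ) + ((C:ℝ) - M) := by
          funext k
          simp [hL_def]
          push_cast
          ring
        rw [heq]
        exact Filter.tendsto_atTop_add_const_right _ _ tendsto_natCast_atTop_atTop
      have hreal : Filter.Tendsto (fun k : ℕ => 3 * A * d / (((L k : ℝ) - M)/M))
          Filter.atTop (nhds 0) := Filter.Tendsto.div_atTop tendsto_const_nhds hden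
      have := (ENNReal.continuous_ofReal.tendsto 0).comp hreal
      simpa [Function.comp_def] using this
    refine le_antisymm ?_ (zero_le)
    exact ge_of_tendsto' htends hk
  -- combine
  rw [ae_iff]
  have hsub : {ω | ¬ ∃ B : ℕ, ∀ t : ℕ, X t ω ≤ B}
      ⊆ gᶜ ∪ ⋃ j : ℕ, {ω | ω ∈ g ∧ X 0 ω < j ∧ ∀ B, ∃ t, B < X t ω} := by
    intro ω hω
    by_cases hωg : ω ∈ g
    · right
      refine Set.mem_iUnion.mpr ⟨X 0 ω + 1, hωg, Nat.lt_succ_self _, ?_⟩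
      intro B
      by_contra h
      push_neg at h
      exact hω ⟨B, h⟩
    · exact Or.inl hωg
  refine measure_mono_null hsub ?_
  refine measure_union_null hgc ?_
  exact measure_iUnion_null hmain
end
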